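/- Let m, n be positive integers and h a norm on ℝ^m. Let M ∈ ℝ^{m×n} satisfy h_*(M u) ≤ |u| for all u ∈ ℝ^n. Let (θ_a, e_a)_{a ∈ A} and (θ_b, e_b)_{b ∈ B} be finite families with θ_a, θ_b ∈ ℝ^m and e_a, e_b ∈ ℝ^n unit vectors such that θ_c · (M e_c) = h(θ_c) for all c ∈ A ∪ B, and suppose mass conservation Σ_{a ∈ A} θ_a = Σ_{b ∈ B} θ_b holds. Then the momentum conservation law Σ_{a ∈ A} h(θ_a) e_a = Σ_{b ∈ B} h(θ_b) e_b holds. -/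

import Mathlib

open MeasureTheory

noncomputable section

/-- `ℝ^n` with the Euclidean norm. -/
abbrev Euc (n : ℕ) := EuclideanSpace ℝ (Fin n)

/-- `h` is a norm on `ℝ^m`. -/
def IsNorm {m : ℕ} (h : (Fin m → ℝ) → ℝ) : Prop :=
  (∀ x y, h (x + y) ≤ h x + h y) ∧ (∀ (c : ℝ) (x), h (c • x) = |c| * h x) ∧
    ∀ x, h x = 0 → x = 0

/-- The dual norm `h_*` of `h`: `h_*(g) = sup { g·θ : h θ ≤ 1 }`. -/
def dualNorm {m : ℕ} (h : (Fin m → ℝ) → ℝ) (g : Fin m → ℝ) : ℝ :=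
  sSup {r | ∃ θ : Fin m → ℝ, h θ ≤ 1 ∧ r = ∑ i, g i * θ i}

/-- Matrix-vector product `M u`. -/
def matVec {m n : ℕ} (M : Fin m → Fin n → ℝ) (u : Euc n) : Fin m → ℝ :=
  fun i => ∑ j, M i j * u j

/-- Frobenius inner product `M : N`. -/
def frob {m n : ℕ} (M N : Fin m → Fin n → ℝ) : ℝ := ∑ i, ∑ j, M i j * N i j

/-- `M ∈ ∂H(0)`, i.e. `h_*(M u) ≤ 1` for all `|u| ≤ 1`. -/
def inSubdiffH {m n : ℕ} (h : (Fin m → ℝ) → ℝ) (M : Fin m → Fin n → ℝ) : Prop :=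
  ∀ u : Euc n, ‖u‖ ≤ 1 → dualNorm h (matVec M u) ≤ 1

/-- The norm `H` on `ℝ^{m×n}` generated by `h`:
`H(N) = sup { M:N : M ∈ ∂H(0) }`. -/
def genNorm {m n : ℕ} (h : (Fin m → ℝ) → ℝ) (N : Fin m → Fin n → ℝ) : ℝ :=
  sSup {r | ∃ M : Fin m → Fin n → ℝ, inSubdiffH h M ∧ r = frob M N}

/-- The rank-one matrix `θ ⊗ e`. -/
def outer {m n : ℕ} (θ : Fin m → ℝ) (e : Euc n) : Fin m → Fin n → ℝ :=
  fun i j => θ i * e j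


open RealInnerProductSpace

section Aux
variable {m : ℕ} {h : (Fin m → ℝ) → ℝ}

lemma h_zero (hh : IsNorm h) : h 0 = 0 := by
  have := hh.2.1 0 0
  simpa using this

lemma h_nonneg (hh : IsNorm h) (x : Fin m → ℝ) : 0 ≤ h x := by
  have h1 := hh.1 x (-x)
  have h2 : h (-x) = h x := by
    have := hh.2.1 (-1) x
    simpa using this
  have h0 : h 0 = 0 := h_zero hh
  have : x + (-x) = 0 := by ring
  rw [this, h0, h2] at h1
  linarith

lemma h_sum_le (hh : IsNorm h) {ι : Type*} (s : Finset ι) (f : ι → Fin m → ℝ) :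
    h (∑ i ∈ s, f i) ≤ ∑ i ∈ s, h (f i) := by
  classical
  induction s using Finset.induction with
  | empty => simp [h_zero hh]
  | @insert a s' hx ih =>
    rw [Finset.sum_insert hx, Finset.sum_insert hx]
    calc h (f a + ∑ i ∈ s', f i) ≤ h (f a) + h (∑ i ∈ s', f i) := hh.1 _ _
      _ ≤ h (f a) + ∑ i ∈ s', h (f i) := by linarith

lemma h_upper (hh : IsNorm h) : ∃ C : ℝ, 0 ≤ C ∧ ∀ x, h x ≤ C * ‖x‖ := by
  classical
  refine ⟨∑ i, h (Pi.single i 1), Finset.sum_nonneg fun i _ => h_nonneg hh _, fun x => ?_⟩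
  have hx : x = ∑ i, x i • (Pi.single i 1 : Fin m → ℝ) := by
    ext j
    simp [Pi.single_apply, Finset.sum_apply, mul_ite]
  calc h x = h (∑ i, x i • (Pi.single i 1 : Fin m → ℝ)) := by rw [← hx]
    _ ≤ ∑ i, h (x i • (Pi.single i 1 : Fin m → ℝ)) := h_sum_le hh _ _
    _ ≤ ∑ i, ‖x‖ * h (Pi.single i 1 : _) := by
        apply Finset.sum_le_sum
        intro i _
        rw [hh.2.1]
        exact mul_le_mul_of_nonneg_right (by simpa using norm_le_pi_norm x i) (h_nonneg hh _)
    _ = (∑ i, h (Pi.single i 1)) * ‖x‖ := by rw [Finset.sum_mul]; exact Finset.sum_congr rfl fun i _ => mul_comm _ _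

lemma h_continuous (hh : IsNorm h) : Continuous h := by
  obtain ⟨C, hC0, hC⟩ := h_upper hh
  have hlip : LipschitzWith (Real.toNNReal C) h := by
    apply LipschitzWith.of_dist_le_mul
    intro x y
    rw [Real.dist_eq, dist_eq_norm]
    have key : ∀ a b : Fin m → ℝ, h a - h b ≤ C * ‖a - b‖ := by
      intro a b
      have := hh.1 (a - b) b
      simp only [sub_add_cancel] at this
      have := hC (a - b)
      linarith
    have h1 := key x y
    have h2 := key y x
    rw [← norm_neg (y - x)] at h2
    simp only [neg_sub] at h2
    rw [abs_sub_le_iff]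
    constructor
    · calc h x - h y ≤ C * ‖x - y‖ := h1
        _ ≤ (Real.toNNReal C) * ‖x - y‖ := by
          apply mul_le_mul_of_nonneg_right _ (norm_nonneg _)
          exact Real.le_coe_toNNReal C
    · calc h y - h x ≤ C * ‖x - y‖ := h2
        _ ≤ (Real.toNNReal C) * ‖x - y‖ := by
          apply mul_le_mul_of_nonneg_right _ (norm_nonneg _)
          exact Real.le_coe_toNNReal C
  exact hlip.continuous

lemma h_lower (hm : 0 < m) (hh : IsNorm h) : ∃ c : ℝ, 0 < c ∧ ∀ x, c * ‖x‖ ≤ h x := by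
  haveI : Nonempty (Fin m) := ⟨⟨0, hm⟩⟩
  have hsne : (Metric.sphere (0 : Fin m → ℝ) 1).Nonempty := by
    refine ⟨fun _ => 1, ?_⟩
    simp [pi_norm_const]
  obtain ⟨x0, hx0mem, hx0min⟩ :=
    (isCompact_sphere (0 : Fin m → ℝ) 1).exists_isMinOn hsne ((h_continuous hh).continuousOn)
  have hx0norm : ‖x0‖ = 1 := by simpa using hx0mem
  have hc : 0 < h x0 := by
    rcases lt_or_eq_of_le (h_nonneg hh x0) with hlt | heq
    · exact hlt
    · exfalso
      have := hh.2.2 x0 heq.symm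
      rw [this] at hx0norm
      simp at hx0norm
  refine ⟨h x0, hc, fun x => ?_⟩
  rcases eq_or_ne x 0 with rfl | hx
  · simp [h_zero hh, h_nonneg hh]
  · have hxn : 0 < ‖x‖ := norm_pos_iff.mpr hx
    have hmem : ‖x‖⁻¹ • x ∈ Metric.sphere (0 : Fin m → ℝ) 1 := by
      simp [norm_smul, abs_of_pos (inv_pos.mpr hxn), inv_mul_cancel₀ hxn.ne']
    have := hx0min hmem
    simp only [IsMinOn, IsMinFilter] at *
    have hval : h (‖x‖⁻¹ • x) = ‖x‖⁻¹ * h x := by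
      rw [hh.2.1, abs_of_pos (inv_pos.mpr hxn)]
    have hle : h x0 ≤ ‖x‖⁻¹ * h x := by rw [← hval]; exact this
    calc h x0 * ‖x‖ ≤ (‖x‖⁻¹ * h x) * ‖x‖ := by
          exact mul_le_mul_of_nonneg_right hle (norm_nonneg _)
      _ = h x := by field_simp

lemma pairing_le (hm : 0 < m) (hh : IsNorm h) (g θ : Fin m → ℝ) :
    ∑ i, g i * θ i ≤ h θ * dualNorm h g := by
  obtain ⟨c, hc, hcl⟩ := h_lower hm hh
  have hbdd : BddAbove {r | ∃ θ : Fin m → ℝ, h θ ≤ 1 ∧ r = ∑ i, g i * θ i} := by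
    refine ⟨(∑ i, |g i|) * c⁻¹, fun r hr => ?_⟩
    obtain ⟨ψ, hψ1, rfl⟩ := hr
    have hψn : ‖ψ‖ ≤ c⁻¹ := by
      have h1 := hcl ψ
      have : c * ‖ψ‖ ≤ 1 := le_trans h1 hψ1
      calc ‖ψ‖ = c⁻¹ * (c * ‖ψ‖) := by field_simp
        _ ≤ c⁻¹ * 1 := mul_le_mul_of_nonneg_left this (le_of_lt (inv_pos.mpr hc))
        _ = c⁻¹ := mul_one _
    calc ∑ i, g i * ψ i ≤ ∑ i, |g i| * c⁻¹ := by
          apply Finset.sum_le_sum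
          intro i _
          calc g i * ψ i ≤ |g i * ψ i| := le_abs_self _
            _ = |g i| * |ψ i| := abs_mul _ _
            _ ≤ |g i| * c⁻¹ := by
                apply mul_le_mul_of_nonneg_left _ (abs_nonneg _)
                calc |ψ i| ≤ ‖ψ‖ := by simpa using norm_le_pi_norm ψ i
                  _ ≤ c⁻¹ := hψn
      _ = (∑ i, |g i|) * c⁻¹ := by rw [Finset.sum_mul]
  rcases eq_or_lt_of_le (h_nonneg hh θ) with heq | hpos
  · have hθ0 : θ = 0 := hh.2.2 θ heq.symm
    subst hθ0
    simp [← heq]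
  · have hmem : ∑ i, g i * ((h θ)⁻¹ * θ i) ∈
        {r | ∃ θ' : Fin m → ℝ, h θ' ≤ 1 ∧ r = ∑ i, g i * θ' i} := by
      refine ⟨(h θ)⁻¹ • θ, le_of_eq ?_, by simp [smul_eq_mul]⟩
      rw [hh.2.1, abs_of_pos (inv_pos.mpr hpos), inv_mul_cancel₀ hpos.ne']
    have hle := le_csSup hbdd hmem
    have : ∑ i, g i * ((h θ)⁻¹ * θ i) = (h θ)⁻¹ * ∑ i, g i * θ i := by
      rw [Finset.mul_sum]; exact Finset.sum_congr rfl fun i _ => by ring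
    rw [this] at hle
    calc ∑ i, g i * θ i = h θ * ((h θ)⁻¹ * ∑ i, g i * θ i) := by field_simp
      _ ≤ h θ * dualNorm h g := mul_le_mul_of_nonneg_left hle (le_of_lt hpos)

end Aux

lemma matVec_add_smul {n : ℕ} (M : Fin m → Fin n → ℝ) (x y : Euc n) (t : ℝ) (i : Fin m) :
    matVec M (x + t • y) i = matVec M x i + t * matVec M y i := by
  simp only [matVec, PiLp.add_apply, PiLp.smul_apply, smul_eq_mul, mul_add, Finset.sum_add_distrib,
    Finset.mul_sum]
  congr 1
  exact Finset.sum_congr rfl fun j _ => by ring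

lemma edge_key {n : ℕ} (hm : 0 < m) (hh : IsNorm h) (M : Fin m → Fin n → ℝ)
    (hM : ∀ u : Euc n, dualNorm h (matVec M u) ≤ ‖u‖)
    (θ : Fin m → ℝ) (e u : Euc n) (he : ‖e‖ = 1)
    (hcal : ∑ i, θ i * matVec M e i = h θ) (t : ℝ) (ht : 0 ≤ t) :
    t * (∑ i, θ i * matVec M u i) ≤ h θ * (t * ⟪e, u⟫ + t ^ 2 * ‖u‖ ^ 2 / 2) := by
  have h1 : ∑ i, θ i * matVec M (e + t • u) i ≤ h θ * ‖e + t • u‖ := by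
    calc ∑ i, θ i * matVec M (e + t • u) i
        = ∑ i, matVec M (e + t • u) i * θ i := by
          exact Finset.sum_congr rfl fun i _ => mul_comm _ _
      _ ≤ h θ * dualNorm h (matVec M (e + t • u)) := pairing_le hm hh _ _
      _ ≤ h θ * ‖e + t • u‖ := mul_le_mul_of_nonneg_left (hM _) (h_nonneg hh _)
  have hsq : ‖e + t • u‖ ^ 2 = 1 + 2 * (t * ⟪e, u⟫) + t ^ 2 * ‖u‖ ^ 2 := by
    rw [norm_add_sq_real, he, real_inner_smul_right, norm_smul, Real.norm_eq_abs,
      abs_of_nonneg ht]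
    ring
  have hcs : |⟪e, u⟫| ≤ ‖u‖ := by
    calc |⟪e, u⟫| ≤ ‖e‖ * ‖u‖ := abs_real_inner_le_norm e u
      _ = ‖u‖ := by rw [he, one_mul]
  have hb0 : 0 ≤ 1 + t * ⟪e, u⟫ + t ^ 2 * ‖u‖ ^ 2 / 2 := by
    nlinarith [abs_le.mp hcs, sq_nonneg (1 - t * ‖u‖), mul_le_mul_of_nonneg_left (abs_le.mp hcs).1 ht, sq_nonneg (t*‖u‖)]
  have h2 : ‖e + t • u‖ ≤ 1 + t * ⟪e, u⟫ + t ^ 2 * ‖u‖ ^ 2 / 2 := by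
    nlinarith [norm_nonneg (e + t • u), hsq, hb0, sq_nonneg (t * ⟪e,u⟫ + t^2*‖u‖^2/2)]
  have h3 : ∑ i, θ i * matVec M (e + t • u) i = h θ + t * ∑ i, θ i * matVec M u i := by
    rw [← hcal, Finset.mul_sum, ← Finset.sum_add_distrib]
    exact Finset.sum_congr rfl fun i _ => by rw [matVec_add_smul]; ring
  have h4 : h θ * ‖e + t • u‖ ≤ h θ * (1 + t * ⟪e, u⟫ + t ^ 2 * ‖u‖ ^ 2 / 2) :=
    mul_le_mul_of_nonneg_left h2 (h_nonneg hh _)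
  rw [h3] at h1
  nlinarith [h1, h4]


/-- momentum conservation: if `M` satisfies `h_*(Mu) ≤ |u|` for all `u`
and finite families of incoming/outgoing edges `(θ_a, e_a)`, `(θ_b, e_b)` with unit
directions satisfy `θ_c · (M e_c) = h(θ_c)` and mass conservation `Σ_a θ_a = Σ_b θ_b`,
then `Σ_a h(θ_a) e_a = Σ_b h(θ_b) e_b`. -/
theorem statement11 {m n : ℕ} (hm : 0 < m) (hn : 0 < n)
    (h : (Fin m → ℝ) → ℝ) (hh : IsNorm h)
    (M : Fin m → Fin n → ℝ) (hM : ∀ u : Euc n, dualNorm h (matVec M u) ≤ ‖u‖)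
    {α β : Type} [Fintype α] [Fintype β]
    (θa : α → Fin m → ℝ) (ea : α → Euc n) (θb : β → Fin m → ℝ) (eb : β → Euc n)
    (hea : ∀ a, ‖ea a‖ = 1) (heb : ∀ b, ‖eb b‖ = 1)
    (hca : ∀ a, ∑ i, θa a i * matVec M (ea a) i = h (θa a))
    (hcb : ∀ b, ∑ i, θb b i * matVec M (eb b) i = h (θb b))
    (hmass : ∑ a, θa a = ∑ b, θb b) :
    ∑ a, h (θa a) • ea a = ∑ b, h (θb b) • eb b := by
  set A : Euc n := ∑ a, h (θa a) • ea a with hA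
  set B : Euc n := ∑ b, h (θb b) • eb b with hB
  -- common flux equality
  have Seq : ∀ u : Euc n, ∑ a, ∑ i, θa a i * matVec M u i
      = ∑ b, ∑ i, θb b i * matVec M u i := by
    intro u
    rw [Finset.sum_comm, Finset.sum_comm (s := Finset.univ) (t := Finset.univ)
      (f := fun b i => θb b i * matVec M u i)]
    refine Finset.sum_congr rfl fun i _ => ?_
    rw [← Finset.sum_mul, ← Finset.sum_mul]
    congr 1
    calc ∑ a, θa a i = (∑ a, θa a) i := by rw [Finset.sum_apply]
      _ = (∑ b, θb b) i := by rw [hmass]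
      _ = ∑ b, θb b i := by rw [Finset.sum_apply]
  have innerA : ∀ u : Euc n, ⟪A, u⟫ = ∑ a, h (θa a) * ⟪ea a, u⟫ := by
    intro u
    rw [hA, sum_inner]
    exact Finset.sum_congr rfl fun a _ => real_inner_smul_left _ _ _
  have innerB : ∀ u : Euc n, ⟪B, u⟫ = ∑ b, h (θb b) * ⟪eb b, u⟫ := by
    intro u
    rw [hB, sum_inner]
    exact Finset.sum_congr rfl fun b _ => real_inner_smul_left _ _ _
  -- main inequality
  have key2 : ∀ u : Euc n, ⟪B, u⟫ ≤ ⟪A, u⟫ := by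
    intro u
    apply le_of_forall_pos_le_add
    intro ε hε
    set Ca : ℝ := ∑ a, h (θa a) with hCa
    set Cb : ℝ := ∑ b, h (θb b) with hCb
    have hCa0 : 0 ≤ Ca := Finset.sum_nonneg fun a _ => h_nonneg hh _
    have hCb0 : 0 ≤ Cb := Finset.sum_nonneg fun b _ => h_nonneg hh _
    set D : ℝ := (Ca + Cb) * ‖u‖ ^ 2 / 2 + 1 with hD
    have hD1 : 1 ≤ D := by
      have h0 : 0 ≤ (Ca + Cb) * ‖u‖ ^ 2 / 2 := by positivity
      rw [hD]
      linarith
    have hD0 : 0 < D := lt_of_lt_of_le one_pos hD1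
    set t : ℝ := ε / D with htdef
    have ht0 : 0 < t := div_pos hε hD0
    -- incoming inequality
    have ia : t * (∑ a, ∑ i, θa a i * matVec M u i)
        ≤ t * ⟪A, u⟫ + t ^ 2 * ‖u‖ ^ 2 / 2 * Ca := by
      have := fun a => edge_key hm hh M hM (θa a) (ea a) u (hea a) (hca a) t ht0.le
      calc t * (∑ a, ∑ i, θa a i * matVec M u i)
          = ∑ a, t * (∑ i, θa a i * matVec M u i) := Finset.mul_sum _ _ _
        _ ≤ ∑ a, h (θa a) * (t * ⟪ea a, u⟫ + t ^ 2 * ‖u‖ ^ 2 / 2) :=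
            Finset.sum_le_sum fun a _ => this a
        _ = t * ⟪A, u⟫ + t ^ 2 * ‖u‖ ^ 2 / 2 * Ca := by
            rw [innerA, hCa, Finset.mul_sum, Finset.mul_sum, ← Finset.sum_add_distrib]
            exact Finset.sum_congr rfl fun a _ => by ring
    -- outgoing inequality (apply with -u)
    have ib : t * (∑ b, ∑ i, θb b i * matVec M (-u) i)
        ≤ -(t * ⟪B, u⟫) + t ^ 2 * ‖u‖ ^ 2 / 2 * Cb := by
      have := fun b => edge_key hm hh M hM (θb b) (eb b) (-u) (heb b) (hcb b) t ht0.le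
      calc t * (∑ b, ∑ i, θb b i * matVec M (-u) i)
          = ∑ b, t * (∑ i, θb b i * matVec M (-u) i) := Finset.mul_sum _ _ _
        _ ≤ ∑ b, h (θb b) * (t * ⟪eb b, -u⟫ + t ^ 2 * ‖-u‖ ^ 2 / 2) :=
            Finset.sum_le_sum fun b _ => this b
        _ = -(t * ⟪B, u⟫) + t ^ 2 * ‖u‖ ^ 2 / 2 * Cb := by
            simp only [inner_neg_right, norm_neg]
            rw [innerB, hCb, Finset.mul_sum, Finset.mul_sum, ← Finset.sum_neg_distrib,
              ← Finset.sum_add_distrib]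
            exact Finset.sum_congr rfl fun b _ => by ring
    have hneg : ∀ b, ∑ i, θb b i * matVec M (-u) i = -(∑ i, θb b i * matVec M u i) := by
      intro b
      rw [← Finset.sum_neg_distrib]
      refine Finset.sum_congr rfl fun i _ => ?_
      have hmv : matVec M (-u) i = -(matVec M u i) := by
        simp [matVec, ← Finset.sum_neg_distrib]
      rw [hmv]; ring
    have ib' : -(t * (∑ b, ∑ i, θb b i * matVec M u i))
        ≤ -(t * ⟪B, u⟫) + t ^ 2 * ‖u‖ ^ 2 / 2 * Cb := by
      calc -(t * (∑ b, ∑ i, θb b i * matVec M u i))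
          = t * (∑ b, ∑ i, θb b i * matVec M (-u) i) := by
            rw [Finset.sum_congr rfl fun b _ => hneg b, Finset.sum_neg_distrib]
            ring
        _ ≤ _ := ib
    have hSeq := Seq u
    have hstep : t * ⟪B, u⟫ ≤ t * ⟪A, u⟫ + t ^ 2 * ‖u‖ ^ 2 / 2 * (Ca + Cb) := by
      rw [hSeq] at ia
      linarith [ia, ib']
    have htD : t * D = ε := by rw [htdef]; field_simp
    have h5 : t * (D - 1) ≤ ε := by
      rw [mul_sub, mul_one]
      linarith
    have h6 : t ^ 2 * ‖u‖ ^ 2 / 2 * (Ca + Cb) = t * (t * (D - 1)) := by rw [hD]; ring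
    have h7 : t * (t * (D - 1)) ≤ t * ε := mul_le_mul_of_nonneg_left h5 ht0.le
    have hmul : t * ⟪B, u⟫ ≤ t * (⟪A, u⟫ + ε) := by
      calc t * ⟪B, u⟫ ≤ t * ⟪A, u⟫ + t ^ 2 * ‖u‖ ^ 2 / 2 * (Ca + Cb) := hstep
        _ = t * ⟪A, u⟫ + t * (t * (D - 1)) := by rw [h6]
        _ ≤ t * ⟪A, u⟫ + t * ε := add_le_add le_rfl h7
        _ = t * (⟪A, u⟫ + ε) := by ring
    exact le_of_mul_le_mul_left hmul ht0
  -- conclude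
  have key3 := key2 (B - A)
  have key4 : ⟪A - B, A - B⟫ ≤ 0 := by
    have e3 : ⟪A - B, B - A⟫ = ⟪A, B - A⟫ - ⟪B, B - A⟫ := inner_sub_left _ _ _
    have e2 : ⟪A - B, B - A⟫ = -⟪A - B, A - B⟫ := by
      have hba : B - A = -(A - B) := by abel
      rw [hba, inner_neg_right]
    linarith [key3]
  have : ‖A - B‖ ^ 2 ≤ 0 := by rw [← real_inner_self_eq_norm_sq]; exact key4
  have hAB : A - B = 0 := by
    have := norm_nonneg (A - B)
    have hnz : ‖A - B‖ = 0 := by nlinarith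
    exact norm_eq_zero.mp hnz
  exact sub_eq_zero.mp hAB
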